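/- For 0 < α < 1 and y ∈ (1-α², 1), the function a₁(α,y) = α·log(α√y + √(y-1+α²)) - log(√y + √(y-1+α²)) - (α/2)·log(1-y) + ((1-α)/2)·log(1-α²) is strictly increasing in y and positive on (1-α², 1), tending to +∞ as y → 1⁻. -/

import Mathlib

open Filter Set

/-- a₁(α,y) = α log(α√y + √(y-1+α²)) - log(√y + √(y-1+α²)) - (α/2) log(1-y)
    + ((1-α)/2) log(1-α²). -/
noncomputable def a1 (α y : ℝ) : ℝ :=
  α * Real.log (α * Real.sqrt y + Real.sqrt (y - 1 + α ^ 2)) -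
    Real.log (Real.sqrt y + Real.sqrt (y - 1 + α ^ 2)) -
    (α / 2) * Real.log (1 - y) + ((1 - α) / 2) * Real.log (1 - α ^ 2)

lemma a1_hasDerivAt (α : ℝ) (hα0 : 0 < α) (hα1 : α < 1) {y : ℝ}
    (hy1 : 1 - α ^ 2 < y) (hy2 : y < 1) :
    HasDerivAt (a1 α)
      (α * ((α * (1 / (2 * Real.sqrt y)) + 1 / (2 * Real.sqrt (y - 1 + α ^ 2)) * 1) /
          (α * Real.sqrt y + Real.sqrt (y - 1 + α ^ 2))) -
        (1 / (2 * Real.sqrt y) + 1 / (2 * Real.sqrt (y - 1 + α ^ 2)) * 1) /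
          (Real.sqrt y + Real.sqrt (y - 1 + α ^ 2)) -
        α / 2 * ((0 - 1) / (1 - y))) y := by
  have hy0 : 0 < y := by nlinarith
  have harg : 0 < y - 1 + α ^ 2 := by linarith
  have hs0 : 0 < Real.sqrt y := Real.sqrt_pos.mpr hy0
  have ht0 : 0 < Real.sqrt (y - 1 + α ^ 2) := Real.sqrt_pos.mpr harg
  have hs := Real.hasDerivAt_sqrt hy0.ne'
  have hinner : HasDerivAt (fun z : ℝ => z - 1 + α ^ 2) 1 y := by
    simpa using ((hasDerivAt_id y).sub_const 1).add_const (α ^ 2)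
  have ht : HasDerivAt (fun z : ℝ => Real.sqrt (z - 1 + α ^ 2))
      (1 / (2 * Real.sqrt (y - 1 + α ^ 2)) * 1) y :=
    (Real.hasDerivAt_sqrt harg.ne').comp y hinner
  have h1 : HasDerivAt (fun z : ℝ => α * Real.sqrt z + Real.sqrt (z - 1 + α ^ 2))
      (α * (1 / (2 * Real.sqrt y)) + 1 / (2 * Real.sqrt (y - 1 + α ^ 2)) * 1) y :=
    (hs.const_mul α).add ht
  have h1pos : 0 < α * Real.sqrt y + Real.sqrt (y - 1 + α ^ 2) := by positivity
  have h2 : HasDerivAt (fun z : ℝ => Real.sqrt z + Real.sqrt (z - 1 + α ^ 2))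
      (1 / (2 * Real.sqrt y) + 1 / (2 * Real.sqrt (y - 1 + α ^ 2)) * 1) y :=
    hs.add ht
  have h2pos : 0 < Real.sqrt y + Real.sqrt (y - 1 + α ^ 2) := by positivity
  have h3 : HasDerivAt (fun z : ℝ => (1 : ℝ) - z) (0 - 1) y :=
    (hasDerivAt_const y 1).sub (hasDerivAt_id y)
  have h3' : (1 : ℝ) - y ≠ 0 := by linarith
  have H := (((h1.log h1pos.ne').const_mul α).sub (h2.log h2pos.ne')).sub
      ((h3.log h3').const_mul (α / 2))
  exact H.add_const (((1 - α) / 2) * Real.log (1 - α ^ 2))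

lemma a1_deriv_pos (α : ℝ) (hα0 : 0 < α) (hα1 : α < 1) {y : ℝ}
    (hy1 : 1 - α ^ 2 < y) (hy2 : y < 1) :
    0 < α * ((α * (1 / (2 * Real.sqrt y)) + 1 / (2 * Real.sqrt (y - 1 + α ^ 2)) * 1) /
          (α * Real.sqrt y + Real.sqrt (y - 1 + α ^ 2))) -
        (1 / (2 * Real.sqrt y) + 1 / (2 * Real.sqrt (y - 1 + α ^ 2)) * 1) /
          (Real.sqrt y + Real.sqrt (y - 1 + α ^ 2)) -
        α / 2 * ((0 - 1) / (1 - y)) := by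
  have hy0 : 0 < y := by nlinarith
  have harg : 0 < y - 1 + α ^ 2 := by linarith
  set s := Real.sqrt y with hsdef
  set t := Real.sqrt (y - 1 + α ^ 2) with htdef
  have hs0 : 0 < s := Real.sqrt_pos.mpr hy0
  have ht0 : 0 < t := Real.sqrt_pos.mpr harg
  have hs2 : s ^ 2 = y := Real.sq_sqrt hy0.le
  have ht2 : t ^ 2 = y - 1 + α ^ 2 := Real.sq_sqrt harg.le
  have h1y : 1 - y = α ^ 2 - t ^ 2 := by rw [ht2]; ring
  have hst : s ^ 2 - t ^ 2 = 1 - α ^ 2 := by rw [hs2, ht2]; ring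
  have key : α * ((α * (1 / (2 * s)) + 1 / (2 * t) * 1) / (α * s + t)) -
        (1 / (2 * s) + 1 / (2 * t) * 1) / (s + t) -
        α / 2 * ((0 - 1) / (1 - y)) =
      α / (2 * (1 - y)) - (1 - α ^ 2) / (2 * s * (α * s + t)) := by
    have h1 : α * s + t ≠ 0 := by positivity
    have h2 : s + t ≠ 0 := by positivity
    have h3 : (1 : ℝ) - y ≠ 0 := by linarith
    field_simp
    ring
  rw [key, sub_pos, div_lt_div_iff₀ (by positivity) (by linarith : 0 < 2 * (1 - y)),
    h1y, ← hst]
  nlinarith [mul_pos (mul_pos hα0 hs0) ht0,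
    mul_pos (mul_pos ht0 ht0) (by nlinarith : 0 < s ^ 2 - t ^ 2),
    mul_pos (mul_pos hα0 hα0) (mul_pos ht0 ht0)]

lemma a1_continuousOn (α : ℝ) (hα0 : 0 < α) (hα1 : α < 1) :
    ContinuousOn (a1 α) (Ico (1 - α ^ 2) 1) := by
  have hα2 : 0 < 1 - α ^ 2 := by nlinarith
  have hc0 : Continuous (fun y : ℝ => Real.sqrt (y - 1 + α ^ 2)) :=
    Real.continuous_sqrt.comp (by continuity)
  have hc1 : Continuous (fun y : ℝ => α * Real.sqrt y + Real.sqrt (y - 1 + α ^ 2)) :=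
    (continuous_const.mul Real.continuous_sqrt).add hc0
  have hc2 : Continuous (fun y : ℝ => Real.sqrt y + Real.sqrt (y - 1 + α ^ 2)) :=
    Real.continuous_sqrt.add hc0
  have hc3 : Continuous (fun y : ℝ => (1 : ℝ) - y) := continuous_const.sub continuous_id
  unfold a1
  refine ((((continuousOn_const.mul (hc1.continuousOn.log ?_)).sub
      (hc2.continuousOn.log ?_)).sub
      (continuousOn_const.mul (hc3.continuousOn.log ?_))).add continuousOn_const)
  · intro y hy
    have : 0 < Real.sqrt y := Real.sqrt_pos.mpr (lt_of_lt_of_le hα2 hy.1)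
    positivity
  · intro y hy
    have : 0 < Real.sqrt y := Real.sqrt_pos.mpr (lt_of_lt_of_le hα2 hy.1)
    positivity
  · intro y hy
    have := hy.2
    simp only [mem_Ico] at hy
    have : (0:ℝ) < 1 - y := by linarith [hy.2]
    exact this.ne'

lemma a1_left (α : ℝ) (hα0 : 0 < α) (hα1 : α < 1) : a1 α (1 - α ^ 2) = 0 := by
  have hα2 : 0 < 1 - α ^ 2 := by nlinarith
  have h0 : (1 - α ^ 2) - 1 + α ^ 2 = 0 := by ring
  have hsq : Real.sqrt ((1 - α ^ 2) - 1 + α ^ 2) = 0 := by rw [h0, Real.sqrt_zero]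
  have hs : 0 < Real.sqrt (1 - α ^ 2) := Real.sqrt_pos.mpr hα2
  have hlogs : Real.log (Real.sqrt (1 - α ^ 2)) = Real.log (1 - α ^ 2) / 2 :=
    Real.log_sqrt hα2.le
  have hα2' : 1 - (1 - α ^ 2) = α ^ 2 := by ring
  unfold a1
  rw [hsq, add_zero, add_zero, hα2',
    Real.log_mul hα0.ne' hs.ne', hlogs, Real.log_pow]
  ring

lemma a1_tendsto (α : ℝ) (hα0 : 0 < α) (hα1 : α < 1) :
    Tendsto (a1 α) (nhdsWithin 1 (Iio 1)) atTop := by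
  have hc0 : Continuous (fun y : ℝ => Real.sqrt (y - 1 + α ^ 2)) :=
    Real.continuous_sqrt.comp (by continuity)
  have h1 : Tendsto (fun y : ℝ => -(α / 2) * Real.log (1 - y))
      (nhdsWithin 1 (Iio 1)) atTop := by
    have hsub : Tendsto (fun y : ℝ => 1 - y) (nhdsWithin 1 (Iio 1))
        (nhdsWithin 0 (Ioi 0)) := by
      apply tendsto_nhdsWithin_of_tendsto_nhds_of_eventually_within
      · have h : Tendsto (fun y : ℝ => 1 - y) (nhds 1) (nhds 0) := by
          have := (continuous_const.sub continuous_id :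
            Continuous (fun y : ℝ => (1:ℝ) - y)).tendsto (1 : ℝ)
          simpa [Pi.sub_def] using this
        exact h.mono_left nhdsWithin_le_nhds
      · filter_upwards [self_mem_nhdsWithin] with y hy
        simp only [mem_Iio] at hy
        simp [sub_pos, hy]
    have hlog : Tendsto (fun y : ℝ => Real.log (1 - y)) (nhdsWithin 1 (Iio 1)) atBot :=
      Real.tendsto_log_nhdsGT_zero.comp hsub
    exact hlog.const_mul_atBot_of_neg (by linarith : -(α / 2) < 0)
  have harg1 : (0:ℝ) < α * Real.sqrt 1 + Real.sqrt (1 - 1 + α ^ 2) := by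
    rw [Real.sqrt_one]; positivity
  have harg2 : (0:ℝ) < Real.sqrt 1 + Real.sqrt (1 - 1 + α ^ 2) := by
    rw [Real.sqrt_one]; positivity
  have h2 : Tendsto (fun y : ℝ =>
      α * Real.log (α * Real.sqrt y + Real.sqrt (y - 1 + α ^ 2)) -
      Real.log (Real.sqrt y + Real.sqrt (y - 1 + α ^ 2)) +
      ((1 - α) / 2) * Real.log (1 - α ^ 2))
      (nhdsWithin 1 (Iio 1))
      (nhds (α * Real.log (α * Real.sqrt 1 + Real.sqrt (1 - 1 + α ^ 2)) -
        Real.log (Real.sqrt 1 + Real.sqrt (1 - 1 + α ^ 2)) +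
        ((1 - α) / 2) * Real.log (1 - α ^ 2))) := by
    apply Tendsto.mono_left _ nhdsWithin_le_nhds
    apply Tendsto.add_const
    apply Tendsto.sub
    · exact ((Real.continuousAt_log harg1.ne').tendsto.comp
        (((continuous_const.mul Real.continuous_sqrt).add hc0).tendsto 1)).const_mul α
    · exact (Real.continuousAt_log harg2.ne').tendsto.comp
        ((Real.continuous_sqrt.add hc0).tendsto 1)
  have := h2.add_atTop h1
  refine this.congr fun y => ?_
  unfold a1
  ring

theorem a1_strictMono_pos (α : ℝ) (hα0 : 0 < α) (hα1 : α < 1) :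
    StrictMonoOn (a1 α) (Ioo (1 - α ^ 2) 1) ∧
    (∀ y ∈ Ioo (1 - α ^ 2) (1 : ℝ), 0 < a1 α y) ∧
    Tendsto (a1 α) (nhdsWithin 1 (Iio 1)) atTop := by
  have hα2 : 0 < 1 - α ^ 2 := by nlinarith
  have hlt : 1 - α ^ 2 < 1 := by nlinarith
  have hmono : StrictMonoOn (a1 α) (Ico (1 - α ^ 2) 1) := by
    apply strictMonoOn_of_deriv_pos (convex_Ico _ _) (a1_continuousOn α hα0 hα1)
    intro y hy
    rw [interior_Ico] at hy
    rw [(a1_hasDerivAt α hα0 hα1 hy.1 hy.2).deriv]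
    exact a1_deriv_pos α hα0 hα1 hy.1 hy.2
  refine ⟨hmono.mono Ioo_subset_Ico_self, fun y hy => ?_, a1_tendsto α hα0 hα1⟩
  have := hmono (left_mem_Ico.mpr hlt) (Ioo_subset_Ico_self hy) hy.1
  rwa [a1_left α hα0 hα1] at this
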